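/- Let N be a positive integer and d ≥ 0 an integer with −d a square modulo 4N, and let β mod 2N satisfy β² ≡ −d (mod 4N). If d is not divisible as a discriminant by the square of any prime dividing N, then the natural map from Q_{d,N,β}/Γ₀(N) to Q_d/Γ (sending a class of forms to its SL₂(ℤ)-class) is a bijection. -/
import Mathlib


/-- An integral binary quadratic form `[a,b,c] = aX² + bXY + cY²`. -/
structure BQF where
  a : ℤ
  b : ℤ
  c : ℤ
deriving DecidableEq

/-- The discriminant `b² − 4ac` of a binary quadratic form. -/
def BQF.disc (Q : BQF) : ℤ := Q.b ^ 2 - 4 * Q.a * Q.c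

/-- Positive definiteness of a binary quadratic form. -/
def BQF.IsPosDef (Q : BQF) : Prop := 0 < Q.a ∧ Q.disc < 0

/-- The (right) action `Q ∘ g` of `SL₂(ℤ)` on binary quadratic forms,
`(Q ∘ g)(x,y) = Q(αx + βy, γx + δy)` for `g = (α,β;γ,δ)`. -/
def BQF.act (Q : BQF) (g : Matrix.SpecialLinearGroup (Fin 2) ℤ) : BQF :=
  ⟨Q.a * (g.1 0 0) ^ 2 + Q.b * (g.1 0 0) * (g.1 1 0) + Q.c * (g.1 1 0) ^ 2,
   2 * Q.a * (g.1 0 0) * (g.1 0 1) + Q.b * ((g.1 0 0) * (g.1 1 1) + (g.1 0 1) * (g.1 1 0))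
     + 2 * Q.c * (g.1 1 0) * (g.1 1 1),
   Q.a * (g.1 0 1) ^ 2 + Q.b * (g.1 0 1) * (g.1 1 1) + Q.c * (g.1 1 1) ^ 2⟩

/-- `Q ∈ 𝒬_d`: positive definite of discriminant `−d`. -/
def BQF.mem (d : ℤ) (Q : BQF) : Prop := Q.IsPosDef ∧ Q.disc = -d

/-- `Q ∈ 𝒬_{d,N,β}`: positive definite of discriminant `−d` with `N ∣ a` and
`b ≡ β (mod 2N)`. -/
def BQF.memN (d : ℤ) (N : ℕ) (β : ℤ) (Q : BQF) : Prop :=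
  Q.mem d ∧ (N : ℤ) ∣ Q.a ∧ Q.b ≡ β [ZMOD (2 * N)]

/-- Equivalence of forms under a subgroup `G` of `SL₂(ℤ)`. -/
def BQF.equiv (G : Subgroup (Matrix.SpecialLinearGroup (Fin 2) ℤ)) (Q Q' : BQF) : Prop :=
  ∃ g ∈ G, Q.act g = Q'

/-- `d` is divisible as a discriminant by `f²`: `d/f²` is an integer which is
again a discriminant (≡ 0 or 3 mod 4, since the forms have discriminant `−d`,
i.e. `−(d/f²)` is a discriminant). -/
def DiscDivisible (d : ℤ) (f : ℤ) : Prop :=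
  (f ^ 2 ∣ d) ∧ ((d / f ^ 2) % 4 = 0 ∨ (d / f ^ 2) % 4 = 3)

section Aux

abbrev SL2' := Matrix.SpecialLinearGroup (Fin 2) ℤ

lemma SL2'.det_eq (g : SL2') : g.1 0 0 * g.1 1 1 - g.1 0 1 * g.1 1 0 = 1 := by
  have h := g.2
  rw [Matrix.det_fin_two] at h
  exact h

lemma BQF.ext' {Q Q' : BQF} (ha : Q.a = Q'.a) (hb : Q.b = Q'.b) (hc : Q.c = Q'.c) : Q = Q' := by
  cases Q; cases Q'; simp_all

lemma BQF.act_disc (Q : BQF) (g : SL2') : (Q.act g).disc = Q.disc := by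
  have h := SL2'.det_eq g
  simp only [act, disc]
  linear_combination ((Q.b^2 - 4*Q.a*Q.c) * (g.1 0 0 * g.1 1 1 - g.1 0 1 * g.1 1 0 + 1)) * h

lemma BQF.act_mul (Q : BQF) (g h : SL2') : Q.act (g * h) = (Q.act g).act h := by
  apply BQF.ext' <;>
  · simp only [act, Matrix.SpecialLinearGroup.coe_mul, Matrix.mul_apply, Fin.sum_univ_two]
    ring

def mkSL (a b c d : ℤ) (h : a * d - b * c = 1) : SL2' :=
  ⟨!![a, b; c, d], by rw [Matrix.det_fin_two]; simpa using h⟩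

@[simp] lemma mkSL00 (a b c d h) : (mkSL a b c d h).1 0 0 = a := rfl
@[simp] lemma mkSL01 (a b c d h) : (mkSL a b c d h).1 0 1 = b := rfl
@[simp] lemma mkSL10 (a b c d h) : (mkSL a b c d h).1 1 0 = c := rfl
@[simp] lemma mkSL11 (a b c d h) : (mkSL a b c d h).1 1 1 = d := rfl

lemma eval_pos {a b c : ℤ} (ha : 0 < a) (hdisc : b^2 - 4*a*c < 0) (x y : ℤ)
    (hxy : ¬(x = 0 ∧ y = 0)) : 0 < a*x^2 + b*x*y + c*y^2 := by
  rcases eq_or_ne y 0 with rfl | hy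
  · have hx : x ≠ 0 := by tauto
    have : 0 < x^2 := by positivity
    nlinarith
  · have h1 : 0 < y^2 := by positivity
    nlinarith [sq_nonneg (2*a*x + b*y)]

lemma keyA {d : ℤ} {N : ℕ} (hsq : ∀ l : ℕ, l.Prime → (l : ℤ) ∣ N → ¬ DiscDivisible d l)
    {p : ℕ} (hp : p.Prime) (hpN : (p:ℤ) ∣ N) {a b c : ℤ}
    (hdisc : b^2 - 4*a*c = -d) (hpa : (p:ℤ) ∣ a) (hpb : (p:ℤ) ∣ b) (hpc : (p:ℤ) ∣ c) :
    False := by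
  obtain ⟨a1, rfl⟩ := hpa
  obtain ⟨b1, rfl⟩ := hpb
  obtain ⟨c1, rfl⟩ := hpc
  set q : ℤ := (p:ℤ) with hq
  have hq0 : q ≠ 0 := by simpa [hq] using hp.ne_zero
  have hd : d = q^2 * (4*a1*c1 - b1^2) := by linarith [hdisc]
  have hdvd : q^2 ∣ d := ⟨_, hd⟩
  have hdivq : d / q^2 = 4*a1*c1 - b1^2 := by
    rw [hd]; exact Int.mul_ediv_cancel_left _ (pow_ne_zero 2 hq0)
  refine hsq p hp hpN ⟨hdvd, ?_⟩
  rw [hdivq]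
  rcases Int.even_or_odd b1 with ⟨m, hm⟩ | ⟨m, hm⟩
  · left; subst hm
    have : 4*a1*c1 - (m+m)^2 = 4*(a1*c1 - m^2) := by ring
    omega
  · right; subst hm
    have : 4*a1*c1 - (2*m+1)^2 = 4*(a1*c1 - m^2 - m) - 1 := by ring
    omega

lemma natDvdInt (q : ℕ) (a : ℤ) : q ∣ a.natAbs ↔ (q:ℤ) ∣ a := by
  rw [← Int.natAbs_dvd_natAbs, Int.natAbs_natCast]

lemma prod_primes_dvd_iff {S : Finset ℕ} (hS : ∀ p ∈ S, p.Prime) {q : ℕ} (hq : q.Prime) :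
    q ∣ ∏ p ∈ S, p ↔ q ∈ S := by
  constructor
  · intro h
    obtain ⟨i, hi, hqi⟩ := (hq.prime.dvd_finset_prod_iff id).mp h
    rwa [Nat.prime_dvd_prime_iff_eq hq (hS i hi) |>.mp hqi]
  · exact fun h => Finset.dvd_prod_of_mem _ h

lemma exists_good_rep (N : ℕ) (hN : 0 < N) (a b c : ℤ)
    (h : ∀ p : ℕ, p.Prime → (p:ℤ) ∣ N → ¬((p:ℤ) ∣ a ∧ (p:ℤ) ∣ b ∧ (p:ℤ) ∣ c)) :
    ∃ x y : ℤ, IsCoprime x y ∧ IsCoprime (a*x^2 + b*x*y + c*y^2) (N:ℤ) := by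
  classical
  set S1 : Finset ℕ := N.primeFactors.filter (fun p => ¬ p ∣ a.natAbs) with hS1
  set S2 : Finset ℕ := N.primeFactors.filter (fun p => p ∣ a.natAbs ∧ ¬ p ∣ c.natAbs) with hS2
  have hS1p : ∀ p ∈ S1, p.Prime := fun p hp => (Nat.prime_of_mem_primeFactors (Finset.mem_filter.mp hp).1)
  have hS2p : ∀ p ∈ S2, p.Prime := fun p hp => (Nat.prime_of_mem_primeFactors (Finset.mem_filter.mp hp).1)
  set xn : ℕ := ∏ p ∈ S2, p with hxn
  set yn : ℕ := ∏ p ∈ S1, p with hyn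
  have hxy : Nat.Coprime xn yn := by
    by_contra hc
    obtain ⟨q, hq, hqx, hqy⟩ := Nat.Prime.not_coprime_iff_dvd.mp hc
    have h2 := (prod_primes_dvd_iff hS2p hq).mp hqx
    have h1 := (prod_primes_dvd_iff hS1p hq).mp hqy
    exact (Finset.mem_filter.mp h1).2 (Finset.mem_filter.mp h2).2.1
  refine ⟨(xn:ℤ), (yn:ℤ), Nat.isCoprime_iff_coprime.mpr hxy, ?_⟩
  set val : ℤ := a*(xn:ℤ)^2 + b*(xn:ℤ)*(yn:ℤ) + c*(yn:ℤ)^2 with hval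
  rw [Int.isCoprime_iff_gcd_eq_one]
  by_contra hc
  have hc' : ¬ Nat.Coprime val.natAbs N := by
    intro hcc
    apply hc
    unfold Int.gcd
    simpa using hcc
  obtain ⟨q, hq, hqv, hqN⟩ := Nat.Prime.not_coprime_iff_dvd.mp hc'
  have hqZN : (q:ℤ) ∣ (N:ℤ) := Int.natCast_dvd_natCast.mpr hqN
  have hqmem : q ∈ N.primeFactors := Nat.mem_primeFactors.mpr ⟨hq, hqN, hN.ne'⟩
  have hqval : (q:ℤ) ∣ val := (natDvdInt q val).mp hqv
  have hqp : Prime (q:ℤ) := Nat.prime_iff_prime_int.mp hq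
  by_cases hqa : q ∣ a.natAbs
  · by_cases hqc : q ∣ c.natAbs
    · have hqb : ¬ (q:ℤ) ∣ b := fun hb =>
        h q hq hqZN ⟨(natDvdInt q a).mp hqa, hb, (natDvdInt q c).mp hqc⟩
      have hqx : ¬ q ∣ xn := fun hx => ((Finset.mem_filter.mp ((prod_primes_dvd_iff hS2p hq).mp hx)).2.2) hqc
      have hqy : ¬ q ∣ yn := fun hy => ((Finset.mem_filter.mp ((prod_primes_dvd_iff hS1p hq).mp hy)).2) hqa
      have : (q:ℤ) ∣ b*(xn:ℤ)*(yn:ℤ) := by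
        have h1 : (q:ℤ) ∣ a*(xn:ℤ)^2 := Dvd.dvd.mul_right ((natDvdInt q a).mp hqa) _
        have h2 : (q:ℤ) ∣ c*(yn:ℤ)^2 := Dvd.dvd.mul_right ((natDvdInt q c).mp hqc) _
        have h3 := dvd_sub (dvd_sub hqval h1) h2
        rw [show val - a*(xn:ℤ)^2 - c*(yn:ℤ)^2 = b*(xn:ℤ)*(yn:ℤ) by rw [hval]; ring] at h3
        exact h3
      rcases hqp.dvd_mul.mp this with h' | hy'
      · rcases hqp.dvd_mul.mp h' with hb' | hx'
        · exact hqb hb'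
        · exact hqx ((natDvdInt q _).mpr hx')
      · exact hqy ((natDvdInt q _).mpr hy')
    · have hq2 : q ∈ S2 := Finset.mem_filter.mpr ⟨hqmem, hqa, hqc⟩
      have hqx : (q:ℤ) ∣ (xn:ℤ) := Int.natCast_dvd_natCast.mpr ((prod_primes_dvd_iff hS2p hq).mpr hq2)
      have hqy : ¬ q ∣ yn := fun hy => ((Finset.mem_filter.mp ((prod_primes_dvd_iff hS1p hq).mp hy)).2) hqa
      have : (q:ℤ) ∣ c*(yn:ℤ)^2 := by
        have h1 : (q:ℤ) ∣ a*(xn:ℤ)^2 + b*(xn:ℤ)*(yn:ℤ) := by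
          refine dvd_add (Dvd.dvd.mul_right ((natDvdInt q a).mp hqa) _) ?_
          exact Dvd.dvd.mul_right (Dvd.dvd.mul_left hqx b) _
        have h3 := dvd_sub hqval h1
        rw [show val - (a*(xn:ℤ)^2 + b*(xn:ℤ)*(yn:ℤ)) = c*(yn:ℤ)^2 by rw [hval]; ring] at h3
        exact h3
      rcases hqp.dvd_mul.mp this with hc' | hy'
      · exact hqc ((natDvdInt q _).mpr hc')
      · rcases hqp.dvd_mul.mp (by rwa [sq] at hy') with hy'' | hy'' <;>
          exact hqy ((natDvdInt q _).mpr hy'')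
  · have hq1 : q ∈ S1 := Finset.mem_filter.mpr ⟨hqmem, hqa⟩
    have hqy : (q:ℤ) ∣ (yn:ℤ) := Int.natCast_dvd_natCast.mpr ((prod_primes_dvd_iff hS1p hq).mpr hq1)
    have hqx : ¬ q ∣ xn := fun hx => hqa (Finset.mem_filter.mp ((prod_primes_dvd_iff hS2p hq).mp hx)).2.1
    have : (q:ℤ) ∣ a*(xn:ℤ)^2 := by
      have h1 : (q:ℤ) ∣ b*(xn:ℤ)*(yn:ℤ) + c*(yn:ℤ)^2 := by
        refine dvd_add (Dvd.dvd.mul_left hqy _) ?_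
        exact (by rw [sq]; exact Dvd.dvd.mul_left (Dvd.dvd.mul_right hqy _) c)
      have h3 := dvd_sub hqval h1
      rw [show val - (b*(xn:ℤ)*(yn:ℤ) + c*(yn:ℤ)^2) = a*(xn:ℤ)^2 by rw [hval]; ring] at h3
      exact h3
    rcases hqp.dvd_mul.mp this with ha' | hx'
    · exact hqa ((natDvdInt q _).mpr ha')
    · rcases hqp.dvd_mul.mp (by rwa [sq] at hx') with hx'' | hx'' <;>
        exact hqx ((natDvdInt q _).mpr hx'')

end Aux

/-- **Bijectivity of `𝒬_{d,N,β}/Γ₀(N) → 𝒬_d/SL₂(ℤ)`.**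
If `−d` is a square mod `4N`, `β² ≡ −d (mod 4N)`, and `d` is not divisible as a
discriminant by the square of any prime dividing `N`, then the natural map from
`𝒬_{d,N,β}/Γ₀(N)` to `𝒬_d/Γ` is a bijection: every `SL₂(ℤ)`-class of forms of
discriminant `−d` contains a form in `𝒬_{d,N,β}`, and any two forms of
`𝒬_{d,N,β}` which are `SL₂(ℤ)`-equivalent are already `Γ₀(N)`-equivalent. -/
theorem natural_map_bijective (N : ℕ) (hN : 0 < N) (d : ℤ) (hd : 0 ≤ d) (β : ℤ)
    (hβ : β ^ 2 ≡ -d [ZMOD (4 * N)])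
    (hsq : ∀ l : ℕ, l.Prime → (l : ℤ) ∣ N → ¬ DiscDivisible d l) :
    (∀ Q : BQF, Q.mem d → ∃ g : Matrix.SpecialLinearGroup (Fin 2) ℤ,
        (Q.act g).memN d N β) ∧
    (∀ Q Q' : BQF, Q.memN d N β → Q'.memN d N β →
        (∃ g : Matrix.SpecialLinearGroup (Fin 2) ℤ, Q.act g = Q') →
        BQF.equiv (CongruenceSubgroup.Gamma0 N) Q Q') := by
  have hβdvd : (4 * (N:ℤ)) ∣ (β^2 + d) := by
    have := hβ.dvd
    have h : (4 * (N:ℤ)) ∣ (-d - β^2) := this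
    have := dvd_neg.mpr h
    simpa [neg_sub, sub_neg_eq_add] using (by
      have : -(-d - β^2) = β^2 + d := by ring
      rw [← this]; exact dvd_neg.mpr h)
  constructor
  · -- surjectivity
    intro Q hQ
    obtain ⟨⟨hQa, hQdisc⟩, hQd⟩ := hQ
    have hdpos : 0 < d := by
      have := hQdisc; rw [hQd] at this; linarith
    have hdiscQ : Q.b^2 - 4*Q.a*Q.c = -d := hQd
    -- step 1: find x, y
    obtain ⟨x, y, hxyco, hvalco⟩ := exists_good_rep N hN Q.a Q.b Q.c
      (fun p hp hpN hall => keyA hsq hp hpN hdiscQ hall.1 hall.2.1 hall.2.2)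
    obtain ⟨u, v, huv⟩ := hxyco
    have hxyne : ¬(x = 0 ∧ y = 0) := by
      rintro ⟨rfl, rfl⟩; simp at huv
    set g1 : SL2' := mkSL x (-v) y u (by linarith [huv]) with hg1
    set Q1 : BQF := Q.act g1 with hQ1
    have hQ1a : Q1.a = Q.a*x^2 + Q.b*x*y + Q.c*y^2 := by
      simp [hQ1, BQF.act, hg1]
    have hAco : IsCoprime Q1.a (N:ℤ) := by rw [hQ1a]; exact hvalco
    have hApos : 0 < Q1.a := by
      rw [hQ1a]
      refine eval_pos hQa ?_ x y hxyne
      have : Q.disc < 0 := by rw [hQd]; linarith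
      simpa [BQF.disc] using this
    have hdisc1 : Q1.b^2 - 4*Q1.a*Q1.c = -d := by
      have h := Q1.act_disc g1
      have h2 : Q1.disc = -d := by rw [hQ1, Q.act_disc g1]; exact hQd
      simpa [BQF.disc] using h2
    -- parity: Q1.b + β is even
    have h4 : (4:ℤ) ∣ β^2 - Q1.b^2 := by
      have h1 : (4:ℤ) ∣ β^2 + d := dvd_trans ⟨(N:ℤ), rfl⟩ hβdvd
      have h2 : β^2 - Q1.b^2 = (β^2 + d) - 4*(Q1.a*Q1.c) := by linarith [hdisc1]
      rw [h2]
      exact dvd_sub h1 ⟨Q1.a*Q1.c, rfl⟩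
    obtain ⟨s, hs⟩ : ∃ s, Q1.b + β = 2*s := by
      rcases Int.even_or_odd (Q1.b + β) with ⟨t, ht⟩ | ⟨t, ht⟩
      · exact ⟨t, by linarith⟩
      · exfalso
        have hβeq : β = 2*t + 1 - Q1.b := by linarith
        have : β^2 - Q1.b^2 = 2*(2*t*t + 2*t - 2*t*Q1.b - Q1.b) + 1 := by rw [hβeq]; ring
        omega
    have hAco2 := hAco
    obtain ⟨u', v', huv'⟩ := hAco2
    set t : ℤ := -(s*u') with ht
    have hkey : s + Q1.a*t = s*v'*(N:ℤ) := by rw [ht]; linear_combination (-s) * huv'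
    set T : SL2' := mkSL 1 t 0 1 (by ring) with hT
    set Q2 : BQF := Q1.act T with hQ2
    have hQ2a : Q2.a = Q1.a := by simp [hQ2, BQF.act, hT]
    have hQ2b : Q2.b = 2*Q1.a*t + Q1.b := by
      have h : Q2.b = 2*Q1.a*1*t + Q1.b*(1*1 + t*0) + 2*Q1.c*0*1 := rfl
      rw [h]; ring
    have hb2 : Q2.b = -β + 2*(N:ℤ)*(s*v') := by
      rw [hQ2b]
      have h1 : Q1.b + β + 2*Q1.a*t = 2*(s + Q1.a*t) := by linarith [hs]
      have h2 : Q1.b + β + 2*Q1.a*t = 2*(s*v'*(N:ℤ)) := by rw [h1, hkey]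
      linarith
    have hdisc2 : Q2.b^2 - 4*Q2.a*Q2.c = -d := by
      have h2 : Q2.disc = -d := by
        rw [hQ2, Q1.act_disc T]
        simpa [BQF.disc] using hdisc1
      simpa [BQF.disc] using h2
    have hNC2 : (N:ℤ) ∣ Q2.c := by
      have h1 : 4*(N:ℤ) ∣ Q2.b^2 + d := by
        rw [hb2]
        have : (-β + 2*(N:ℤ)*(s*v'))^2 + d =
            (β^2 + d) + 4*(N:ℤ)*((N:ℤ)*(s*v')^2 - β*(s*v')) := by ring
        rw [this]
        exact dvd_add hβdvd ⟨_, rfl⟩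
      have h2 : Q2.b^2 + d = 4*(Q2.a*Q2.c) := by linarith [hdisc2]
      rw [h2] at h1
      obtain ⟨k, hk⟩ := h1
      have hac : Q2.a * Q2.c = (N:ℤ)*k := by linarith
      have h3 : (N:ℤ) ∣ Q2.a * Q2.c := ⟨k, hac⟩
      rw [hQ2a] at h3
      exact (hAco.symm).dvd_of_dvd_mul_left h3
    set S : SL2' := mkSL 0 (-1) 1 0 (by ring) with hSdef
    set Q3 : BQF := Q2.act S with hQ3
    have hQ3a : Q3.a = Q2.c := by simp [hQ3, BQF.act, hSdef]
    have hQ3b : Q3.b = -Q2.b := by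
      have h : Q3.b = 2*Q2.a*0*(-1) + Q2.b*(0*0 + (-1)*1) + 2*Q2.c*1*0 := rfl
      rw [h]; ring
    have hdisc3 : Q3.disc = -d := by
      rw [hQ3, Q2.act_disc S]
      simpa [BQF.disc] using hdisc2
    refine ⟨g1 * T * S, ?_⟩
    have hact : Q.act (g1 * T * S) = Q3 := by
      rw [BQF.act_mul, BQF.act_mul, ← hQ1, ← hQ2, ← hQ3]
    rw [hact]
    have hC2pos : 0 < Q2.c := by
      have hA2 : Q2.a = Q1.a := hQ2a
      nlinarith [sq_nonneg Q2.b, hdisc2, hApos, hdpos]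
    refine ⟨⟨⟨?_, ?_⟩, hdisc3⟩, ?_, ?_⟩
    · rw [hQ3a]; exact hC2pos
    · rw [hdisc3]; linarith
    · rw [hQ3a]; exact hNC2
    · rw [hQ3b, hb2]
      show Int.ModEq _ _ _
      rw [Int.modEq_iff_dvd]
      exact ⟨s*v', by ring⟩
  · -- injectivity
    rintro Q Q' ⟨⟨_, hQdisc⟩, hNa, hQb⟩ ⟨⟨_, hQ'disc⟩, hNa', hQ'b⟩ ⟨g, hg⟩
    have hdet := SL2'.det_eq g
    have E1 : Q.a*(g.1 0 0)^2 + Q.b*(g.1 0 0)*(g.1 1 0) + Q.c*(g.1 1 0)^2 = Q'.a :=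
      congrArg BQF.a hg
    have E2 : 2*Q.a*(g.1 0 0)*(g.1 0 1) + Q.b*((g.1 0 0)*(g.1 1 1) + (g.1 0 1)*(g.1 1 0))
        + 2*Q.c*(g.1 1 0)*(g.1 1 1) = Q'.b := congrArg BQF.b hg
    set α : ℤ := g.1 0 0
    set B : ℤ := g.1 0 1
    set γ : ℤ := g.1 1 0
    set δ : ℤ := g.1 1 1
    have hbb' : (2*(N:ℤ)) ∣ (Q'.b - Q.b) := by
      have h1 : Q.b ≡ Q'.b [ZMOD (2*(N:ℤ))] := hQb.trans hQ'b.symm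
      exact Int.ModEq.dvd h1
    have R1 : (N:ℤ) ∣ γ * (Q.b*α + Q.c*γ) := by
      have h1 : γ * (Q.b*α + Q.c*γ) = Q'.a - Q.a*α^2 := by linear_combination E1
      rw [h1]
      exact dvd_sub hNa' (Dvd.dvd.mul_right hNa _)
    have R3 : (N:ℤ) ∣ γ * (Q.b*B + Q.c*δ) := by
      obtain ⟨k, hk⟩ := hbb'
      have h1 : 2*(Q.a*α*B + γ*(Q.b*B + Q.c*δ)) = Q'.b - Q.b := by
        linear_combination E2 + (-Q.b) * hdet
      have h2 : Q.a*α*B + γ*(Q.b*B + Q.c*δ) = (N:ℤ)*k := by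
        have h3 : 2*(Q.a*α*B + γ*(Q.b*B + Q.c*δ)) = 2*((N:ℤ)*k) := by
          rw [h1, hk]; ring
        linarith
      have h3 : (N:ℤ) ∣ Q.a*α*B + γ*(Q.b*B + Q.c*δ) := ⟨k, h2⟩
      have h4 : (N:ℤ) ∣ Q.a*α*B := Dvd.dvd.mul_right (Dvd.dvd.mul_right hNa _) _
      have h5 := dvd_sub h3 h4
      simpa using h5
    have hNγ : (N:ℤ) ∣ γ := by
      rw [← Int.dvd_natAbs, Int.natCast_dvd_natCast]
      rw [Nat.dvd_iff_prime_pow_dvd_dvd]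
      intro p k hp
      induction k with
      | zero => intro _; simpa using Nat.one_dvd _
      | succ k ih =>
        intro hpkN
        have hPP : p.Prime := hp
        have hpkγ : p^k ∣ γ.natAbs := ih (dvd_trans (pow_dvd_pow p (Nat.le_succ k)) hpkN)
        have hpkγZ : ((p:ℤ))^k ∣ γ := by
          have h := (natDvdInt (p^k) γ).mp hpkγ
          rw [Nat.cast_pow] at h
          exact h
        obtain ⟨γ1, hγ1⟩ := hpkγZ
        show p^(k+1) ∣ γ.natAbs
        rw [natDvdInt, Nat.cast_pow]
        by_cases hpγ1 : (p:ℤ) ∣ γ1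
        · obtain ⟨γ2, hγ2⟩ := hpγ1
          exact ⟨γ2, by rw [hγ1, hγ2]; ring⟩
        · exfalso
          have hpP : Prime ((p:ℤ)) := Nat.prime_iff_prime_int.mp hPP
          have hp0 : ((p:ℤ)) ≠ 0 := hpP.ne_zero
          have hpN1 : ((p:ℤ))^(k+1) ∣ (N:ℤ) := by
            have h := Int.natCast_dvd_natCast.mpr hpkN
            rw [Nat.cast_pow] at h
            exact h
          have hdvdX : ∀ X : ℤ, (N:ℤ) ∣ γ * X → (p:ℤ) ∣ X := by
            intro X hX
            have h1 : ((p:ℤ))^(k+1) ∣ γ * X := dvd_trans hpN1 hX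
            have h3 : (p:ℤ)^k * (p:ℤ) ∣ (p:ℤ)^k * (γ1 * X) := by
              have h2 : (p:ℤ)^k * (p:ℤ) = (p:ℤ)^(k+1) := by ring
              rw [h2]
              convert h1 using 1
              rw [hγ1]; ring
            have h4 : (p:ℤ) ∣ γ1 * X :=
              (mul_dvd_mul_iff_left (pow_ne_zero k hp0)).mp h3
            rcases hpP.dvd_mul.mp h4 with h | h
            · exact absurd h hpγ1
            · exact h
          have hX1 := hdvdX _ R1
          have hX3 := hdvdX _ R3
          have hpNZ : (p:ℤ) ∣ (N:ℤ) :=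
            dvd_trans (by exact_mod_cast dvd_pow_self (p:ℤ) (Nat.succ_ne_zero k)) hpN1
          have hpa : (p:ℤ) ∣ Q.a := dvd_trans hpNZ hNa
          have hpb : (p:ℤ) ∣ Q.b := by
            have h1 : Q.b = δ*(Q.b*α + Q.c*γ) - γ*(Q.b*B + Q.c*δ) := by
              linear_combination (-Q.b) * hdet
            rw [h1]
            exact dvd_sub (Dvd.dvd.mul_left hX1 δ) (Dvd.dvd.mul_left hX3 γ)
          have hpc : (p:ℤ) ∣ Q.c := by
            have h1 : Q.c = α*(Q.b*B + Q.c*δ) - B*(Q.b*α + Q.c*γ) := by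
              linear_combination (-Q.c) * hdet
            rw [h1]
            exact dvd_sub (Dvd.dvd.mul_left hX3 α) (Dvd.dvd.mul_left hX1 B)
          exact keyA hsq hPP hpNZ (show Q.b^2 - 4*Q.a*Q.c = -d from hQdisc) hpa hpb hpc
    refine ⟨g, ?_, hg⟩
    rw [CongruenceSubgroup.Gamma0_mem]
    exact (ZMod.intCast_zmod_eq_zero_iff_dvd _ N).mpr hNγ
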